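/- Let m > n be positive integers with a = m² − n², b = 2mn. If m⁴ + 4m²n² − n⁴ is a perfect square, then the curve y² = x³ + (a⁴+b⁴)x² + a⁴b⁴x has a rational point with x-coordinate 8m⁴n²(m²−n²); equivalently, 8m⁴n²(m²−n²) · ((8m⁴n²(m²−n²))² + (a⁴+b⁴)·8m⁴n²(m²−n²) + a⁴b⁴) is a perfect square. -/
import Mathlib

theorem stmt_15 (m n a b : ℤ) (hn : 0 < n) (hmn : n < m)
    (ha : a = m ^ 2 - n ^ 2) (hb : b = 2 * m * n)
    (hsq : IsSquare (m ^ 4 + 4 * m ^ 2 * n ^ 2 - n ^ 4)) :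
    IsSquare (8 * m ^ 4 * n ^ 2 * (m ^ 2 - n ^ 2) *
      ((8 * m ^ 4 * n ^ 2 * (m ^ 2 - n ^ 2)) ^ 2 +
        (a ^ 4 + b ^ 4) * (8 * m ^ 4 * n ^ 2 * (m ^ 2 - n ^ 2)) +
        a ^ 4 * b ^ 4)) := by
  obtain ⟨c, hc⟩ := hsq
  subst ha hb
  exact ⟨8 * m ^ 4 * n ^ 2 * (m ^ 2 - n ^ 2) * (m ^ 2 + n ^ 2) * c, by
    linear_combination (64 * m ^ 8 * n ^ 4 * (m ^ 2 - n ^ 2) ^ 2 * (m ^ 2 + n ^ 2) ^ 2) * hc⟩
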